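/- Let A be an n-by-n weighted shift matrix (n ≥ 2) with weights a_1, …, a_{n−1}, 0 (the last weight equal to zero). Then for every z ∈ ℂ, det(z·I_n + Re A) = Σ_{r=0}^{⌊n/2⌋} S_r(|a_1|², …, |a_{n−1}|², 0)·(−1/4)^r·z^{n−2r}, where Re A = (A + A*)/2. -/

import Mathlib

open Matrix

/-- The n-by-n weighted shift matrix with weights `a 0, …, a (n-1)`
(representing `a_1, …, a_n`): the `(i, i+1)` entry is `a i` (cyclically). -/
def wsMatrix {n : ℕ} (a : Fin n → ℂ) : Matrix (Fin n) (Fin n) ℂ :=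
  fun i j => if (j : ℕ) = ((i : ℕ) + 1) % n then a i else 0

/-- Two square complex matrices are unitarily equivalent if `B = U* A U`
for some unitary `U`. -/
def UnitarilyEquiv {n : ℕ} (A B : Matrix (Fin n) (Fin n) ℂ) : Prop :=
  ∃ U : Matrix (Fin n) (Fin n) ℂ, U ∈ Matrix.unitaryGroup (Fin n) ℂ ∧ B = Uᴴ * A * U

/-- The circularly symmetric function `S_r(c_1, …, c_N)`: the sum, over all
`r`-element subsets of the cyclically ordered index set `{1, …, N}` containing
no two cyclically adjacent indices, of the products of the corresponding `c`'s.
(`S_0 = 1`, and `S_r = 0` when no such subset exists.) -/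
noncomputable def Scirc {N : ℕ} (r : ℕ) (c : Fin N → ℂ) : ℂ :=
  ∑ s ∈ Finset.univ.filter
      (fun s : Finset (Fin N) =>
        s.card = r ∧ ∀ i ∈ s, ∀ j ∈ s, ((i : ℕ) + 1) % N ≠ (j : ℕ)),
    ∏ i ∈ s, c i

noncomputable section AuxStmt16

/-- Entry function of a tridiagonal matrix. -/
def Etr (z : ℂ) (u v : ℕ → ℂ) (i j : ℕ) : ℂ :=
  if i = j then z else if j = i + 1 then u i else if i = j + 1 then v j else 0

/-- The k×k tridiagonal matrix with diagonal z, superdiagonal u, subdiagonal v. -/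
def Ttr (z : ℂ) (u v : ℕ → ℂ) (k : ℕ) : Matrix (Fin k) (Fin k) ℂ :=
  Matrix.of fun i j => Etr z u v (i : ℕ) (j : ℕ)

/-- Continuant recurrence. -/
def Ftr (z : ℂ) (w : ℕ → ℂ) : ℕ → ℂ
  | 0 => 1
  | 1 => z
  | (k+2) => z * Ftr z w (k+1) - w k * Ftr z w k

lemma Ttr_sub (z : ℂ) (u v : ℕ → ℂ) (k : ℕ) :
    (Ttr z u v (k+1)).submatrix Fin.castSucc Fin.castSucc = Ttr z u v k := by
  ext i j
  simp [Ttr, Matrix.submatrix_apply]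

lemma det_Ttr (z : ℂ) (u v : ℕ → ℂ) : ∀ k, (Ttr z u v k).det = Ftr z (fun i => u i * v i) k := by
  intro k
  induction k using Nat.strong_induction_on with
  | _ k ih =>
    match k with
    | 0 => simp [Ttr, Ftr, Matrix.det_fin_zero]
    | 1 => simp [Ttr, Ftr, Matrix.det_fin_one, Etr]
    | (m+2) =>
      have hrow := Matrix.det_succ_row (Ttr z u v (m+2)) (Fin.last (m+1))
      rw [Fin.sum_univ_castSucc, Fin.sum_univ_castSucc] at hrow
      -- the sum over Fin m vanishes
      have hz : ∀ j : Fin m,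
          (-1 : ℂ) ^ ((Fin.last (m+1) : ℕ) + ((j.castSucc.castSucc : Fin (m+2)) : ℕ)) *
            Ttr z u v (m+2) (Fin.last (m+1)) j.castSucc.castSucc *
            ((Ttr z u v (m+2)).submatrix (Fin.last (m+1)).succAbove
              (j.castSucc.castSucc).succAbove).det = 0 := by
        intro j
        have hj : (j : ℕ) < m := j.isLt
        have : Ttr z u v (m+2) (Fin.last (m+1)) j.castSucc.castSucc = 0 := by
          show Etr z u v (m+1) ((j : ℕ)) = 0
          unfold Etr
          rw [if_neg (by omega), if_neg (by omega), if_neg (by omega)]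
        rw [this]; ring
      rw [Finset.sum_congr rfl (fun j _ => hz j), Finset.sum_const_zero, zero_add] at hrow
      -- value of succAbove of the middle pivot
      have pv : ∀ j : Fin (m+1),
          ((((Fin.last m).castSucc).succAbove j : Fin (m+2)) : ℕ) =
            if (j : ℕ) < m then (j : ℕ) else (j : ℕ) + 1 := by
        intro j
        by_cases h : (j : ℕ) < m
        · rw [Fin.succAbove_of_castSucc_lt _ _ (by simp [Fin.lt_def, h]), if_pos h]
          simp
        · rw [Fin.succAbove_of_le_castSucc _ _ (by simp [Fin.le_def]; omega), if_neg h]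
          simp
      -- determinant of the middle minor
      have hBdet : ((Ttr z u v (m+2)).submatrix (Fin.last (m+1)).succAbove
            ((Fin.last m).castSucc).succAbove).det = u m * (Ttr z u v m).det := by
        rw [Fin.succAbove_last]
        set B := (Ttr z u v (m+2)).submatrix Fin.castSucc ((Fin.last m).castSucc).succAbove
          with hBdef
        have hBentry : ∀ (i j : Fin (m+1)),
            B i j = Etr z u v (i : ℕ) (if (j : ℕ) < m then (j : ℕ) else (j : ℕ) + 1) := by
          intro i j
          show Etr z u v _ _ = _
          rw [pv j]
          simp
        have hcol := Matrix.det_succ_column B (Fin.last m)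
        rw [Fin.sum_univ_castSucc] at hcol
        have hz2 : ∀ i : Fin m,
            (-1 : ℂ) ^ (((i.castSucc : Fin (m+1)) : ℕ) + ((Fin.last m : Fin (m+1)) : ℕ)) *
              B i.castSucc (Fin.last m) *
              (B.submatrix (i.castSucc).succAbove (Fin.last m).succAbove).det = 0 := by
          intro i
          have hi : (i : ℕ) < m := i.isLt
          have : B i.castSucc (Fin.last m) = 0 := by
            rw [hBentry]
            simp only [Fin.coe_castSucc, Fin.val_last]
            rw [if_neg (lt_irrefl m)]
            unfold Etr
            rw [if_neg (by omega), if_neg (by omega), if_neg (by omega)]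
          rw [this]; ring
        rw [Finset.sum_congr rfl (fun i _ => hz2 i), Finset.sum_const_zero, zero_add] at hcol
        have hsign : ((-1 : ℂ)) ^ (((Fin.last m : Fin (m+1)) : ℕ) + ((Fin.last m : Fin (m+1)) : ℕ)) = 1 :=
          Even.neg_one_pow ⟨m, by simp [Fin.val_last, two_mul]⟩
        have hentry : B (Fin.last m) (Fin.last m) = u m := by
          rw [hBentry]
          simp only [Fin.val_last]
          rw [if_neg (lt_irrefl m)]
          unfold Etr
          rw [if_neg (by omega), if_pos rfl]
        have hsub : B.submatrix (Fin.last m).succAbove (Fin.last m).succAbove = Ttr z u v m := by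
          rw [Fin.succAbove_last]
          ext i j
          have hj : (j : ℕ) < m := j.isLt
          show B i.castSucc j.castSucc = _
          rw [hBentry]
          simp only [Fin.coe_castSucc, if_pos hj]
          rfl
        rw [hsub, hsign, hentry] at hcol
        rw [hcol]; ring
      -- the two surviving terms of the row expansion
      have hmid : Ttr z u v (m+2) (Fin.last (m+1)) ((Fin.last m).castSucc : Fin (m+2)) = v m := by
        show Etr z u v (m+1) m = v m
        unfold Etr
        rw [if_neg (by omega), if_neg (by omega), if_pos rfl]
      have hlastentry : Ttr z u v (m+2) (Fin.last (m+1)) (Fin.last (m+1)) = z := by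
        show Etr z u v (m+1) (m+1) = z
        unfold Etr
        rw [if_pos rfl]
      have hsublast : (Ttr z u v (m+2)).submatrix (Fin.last (m+1)).succAbove
          (Fin.last (m+1)).succAbove = Ttr z u v (m+1) := by
        rw [Fin.succAbove_last]; exact Ttr_sub z u v (m+1)
      have hsign1 : ((-1 : ℂ)) ^ (((Fin.last (m+1) : Fin (m+2)) : ℕ) +
          (((Fin.last m).castSucc : Fin (m+2)) : ℕ)) = -1 := by
        have h : ((Fin.last (m+1) : Fin (m+2)) : ℕ) + (((Fin.last m).castSucc : Fin (m+2)) : ℕ)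
            = 2*m+1 := by simp [Fin.val_last]; omega
        rw [h]
        exact Odd.neg_one_pow ⟨m, by ring⟩
      have hsign2 : ((-1 : ℂ)) ^ (((Fin.last (m+1) : Fin (m+2)) : ℕ) +
          ((Fin.last (m+1) : Fin (m+2)) : ℕ)) = 1 :=
        Even.neg_one_pow ⟨m+1, by simp [Fin.val_last, two_mul]⟩
      rw [hBdet, hmid, hlastentry, hsublast, hsign1, hsign2] at hrow
      rw [hrow, ih (m+1) (by omega), ih m (by omega)]
      show _ = z * Ftr z (fun i => u i * v i) (m+1) - u m * v m * Ftr z (fun i => u i * v i) m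
      ring

/-- Independent subsets of the path on `{0, …, k-2}`. -/
def indepN (k : ℕ) : Finset (Finset ℕ) :=
  (Finset.range (k-1)).powerset.filter fun s => ∀ i ∈ s, i + 1 ∉ s

lemma indepN_card_le {k : ℕ} {s : Finset ℕ} (hs : s ∈ indepN k) : 2 * s.card ≤ k := by
  simp only [indepN, Finset.mem_filter, Finset.mem_powerset] at hs
  obtain ⟨hsub, hind⟩ := hs
  have hdisj : Disjoint s (s.image (· + 1)) := by
    rw [Finset.disjoint_right]
    intro x hx hxs
    obtain ⟨i, hi, rfl⟩ := Finset.mem_image.mp hx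
    exact hind i hi hxs
  have hsub2 : s ∪ s.image (· + 1) ⊆ Finset.range k := by
    intro x hx
    rcases Finset.mem_union.mp hx with h | h
    · have := hsub h; simp only [Finset.mem_range] at this ⊢; omega
    · obtain ⟨i, hi, rfl⟩ := Finset.mem_image.mp h
      have := hsub hi; simp only [Finset.mem_range] at this ⊢; omega
  have hc := Finset.card_le_card hsub2
  rw [Finset.card_union_of_disjoint hdisj,
    Finset.card_image_of_injective _ (add_left_injective 1), Finset.card_range] at hc
  omega

lemma Ftr_eq_sum (z : ℂ) (w : ℕ → ℂ) :
    ∀ k, Ftr z w k = ∑ s ∈ indepN k, (∏ i ∈ s, (-(w i))) * z ^ (k - 2 * s.card) := by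
  intro k
  induction k using Nat.strong_induction_on with
  | _ k ih =>
    match k with
    | 0 => simp [Ftr, indepN, Finset.filter_singleton]
    | 1 => simp [Ftr, indepN, Finset.filter_singleton]
    | (m+2) =>
      rw [← Finset.sum_filter_add_sum_filter_not (indepN (m+2)) (fun s => m ∉ s)]
      have hA : (indepN (m+2)).filter (fun s => m ∉ s) = indepN (m+1) := by
        ext s
        simp only [indepN, Nat.add_sub_cancel, Finset.mem_filter, Finset.mem_powerset]
        constructor
        · rintro ⟨⟨hsub, hind⟩, hm⟩
          refine ⟨fun x hx => ?_, hind⟩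
          have h1 := hsub hx
          simp only [Finset.mem_range] at h1 ⊢
          have : x ≠ m := fun h => hm (h ▸ hx)
          omega
        · rintro ⟨hsub, hind⟩
          have hm : m ∉ s := fun h => by
            have := hsub h; simp only [Finset.mem_range] at this; omega
          refine ⟨⟨fun x hx => ?_, hind⟩, hm⟩
          have := hsub hx
          simp only [Finset.mem_range] at this ⊢
          omega
      have hB : ∑ s ∈ (indepN (m+2)).filter (fun s => ¬ m ∉ s),
            (∏ i ∈ s, (-(w i))) * z ^ (m+2 - 2 * s.card)
          = ∑ t ∈ indepN m, (-(w m)) * ((∏ i ∈ t, (-(w i))) * z ^ (m - 2 * t.card)) := by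
        refine Finset.sum_nbij' (fun s => s.erase m) (fun t => insert m t) ?_ ?_ ?_ ?_ ?_
        · intro s hs
          simp only [Finset.mem_filter, not_not] at hs
          obtain ⟨hs, hm⟩ := hs
          simp only [indepN, Nat.add_sub_cancel, Finset.mem_filter, Finset.mem_powerset] at hs ⊢
          obtain ⟨hsub, hind⟩ := hs
          constructor
          · intro x hx
            obtain ⟨hxm, hxs⟩ := Finset.mem_erase.mp hx
            have h1 := hsub hxs
            have h2 : x + 1 ∉ s := hind x hxs
            have h3 : x + 1 ≠ m := fun h => h2 (h ▸ hm)
            simp only [Finset.mem_range] at h1 ⊢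
            omega
          · intro i hi
            have := hind i (Finset.mem_of_mem_erase hi)
            exact fun h => this (Finset.mem_of_mem_erase h)
        · intro t ht
          simp only [indepN, Nat.add_sub_cancel, Finset.mem_filter, Finset.mem_powerset] at ht ⊢
          obtain ⟨hsub, hind⟩ := ht
          have hrange : ∀ x ∈ t, x + 1 < m := by
            intro x hx; have := hsub hx; simp only [Finset.mem_range] at this; omega
          refine ⟨⟨?_, ?_⟩, not_not.mpr (Finset.mem_insert_self m t)⟩
          · intro x hx
            rcases Finset.mem_insert.mp hx with rfl | hx
            · simp only [Finset.mem_range]; omega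
            · have := hrange x hx; simp only [Finset.mem_range]; omega
          · intro i hi hcon
            rcases Finset.mem_insert.mp hi with rfl | hi
            · rcases Finset.mem_insert.mp hcon with h | h
              · omega
              · exact absurd (hrange _ h) (by omega)
            · rcases Finset.mem_insert.mp hcon with h | h
              · exact absurd (hrange _ hi) (by omega)
              · exact hind i hi h
        · intro s hs
          simp only [Finset.mem_filter, not_not] at hs
          exact Finset.insert_erase hs.2
        · intro t ht
          simp only [indepN, Finset.mem_filter, Finset.mem_powerset] at ht
          have hm : m ∉ t := fun h => by
            have := ht.1 h; simp only [Finset.mem_range] at this; omega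
          exact Finset.erase_insert hm
        · intro s hs
          simp only [Finset.mem_filter, not_not] at hs
          obtain ⟨hs', hm⟩ := hs
          have hcard := indepN_card_le hs'
          have hc1 : 1 ≤ s.card := Finset.card_pos.mpr ⟨m, hm⟩
          rw [← Finset.mul_prod_erase s _ hm, Finset.card_erase_of_mem hm]
          have hexp : m + 2 - 2 * s.card = m - 2 * (s.card - 1) := by omega
          rw [hexp]; ring
      rw [hA, hB, ← Finset.mul_sum, ← ih m (by omega)]
      have hz : ∑ s ∈ indepN (m+1), (∏ i ∈ s, (-(w i))) * z ^ (m + 2 - 2 * s.card)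
          = z * Ftr z w (m+1) := by
        rw [ih (m+1) (by omega), Finset.mul_sum]
        refine Finset.sum_congr rfl fun s hs => ?_
        have := indepN_card_le hs
        rw [show m + 2 - 2 * s.card = (m + 1 - 2 * s.card) + 1 by omega, pow_succ]
        ring
      rw [hz]
      show z * Ftr z w (m+1) - w m * Ftr z w m = _
      ring

lemma cyc_card_le {n : ℕ} (hn : 2 ≤ n) (s : Finset (Fin n))
    (hs : ∀ i ∈ s, ∀ j ∈ s, ((i : ℕ) + 1) % n ≠ (j : ℕ)) : s.card ≤ n / 2 := by
  haveI : NeZero n := ⟨by omega⟩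
  have hval1 : ((1 : Fin n) : ℕ) = 1 := by rw [Fin.val_one', Nat.mod_eq_of_lt (by omega)]
  have hdisj : Disjoint s (s.image (· + 1)) := by
    rw [Finset.disjoint_right]
    intro x hx hxs
    obtain ⟨i, hi, rfl⟩ := Finset.mem_image.mp hx
    refine hs i hi _ hxs ?_
    rw [Fin.val_add, hval1]
  have hc := Finset.card_le_univ (s ∪ s.image (· + 1))
  rw [Finset.card_union_of_disjoint hdisj,
    Finset.card_image_of_injective _ (add_left_injective _)] at hc
  simp only [Finset.card_univ, Fintype.card_fin] at hc
  omega

def uu (n : ℕ) (a : Fin n → ℂ) : ℕ → ℂ :=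
  fun m => if h : m + 1 < n then a ⟨m, Nat.lt_of_succ_lt h⟩ / 2 else 0

def vv (n : ℕ) (a : Fin n → ℂ) : ℕ → ℂ :=
  fun m => if h : m + 1 < n then (starRingEnd ℂ) (a ⟨m, Nat.lt_of_succ_lt h⟩) / 2 else 0

end AuxStmt16

theorem stmt16 (n : ℕ) (hn : 2 ≤ n) (a : Fin n → ℂ)
    (A : Matrix (Fin n) (Fin n) ℂ)
    (hA : A = wsMatrix fun i => if (i : ℕ) + 1 < n then a i else 0)
    (z : ℂ) :
    (z • (1 : Matrix (Fin n) (Fin n) ℂ) + (1 / 2 : ℂ) • (A + Aᴴ)).det =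
      ∑ r ∈ Finset.range (n / 2 + 1),
        Scirc r (fun i : Fin n =>
            if (i : ℕ) + 1 < n then (((‖a i‖ : ℝ) : ℂ)) ^ 2 else 0) *
          (-(1 / 4) : ℂ) ^ r * z ^ (n - 2 * r) := by
  classical
  obtain ⟨b, hb⟩ : ∃ b : ℕ → ℂ, ∀ i : Fin n, b (i : ℕ) = a i :=
    ⟨fun m => if h : m < n then a ⟨m, h⟩ else 0, fun i => by simp⟩
  have hmod : ∀ m : ℕ, m < n → (m + 1) % n = if m + 1 < n then m + 1 else 0 := by
    intro m hm
    split_ifs with h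
    · exact Nat.mod_eq_of_lt h
    · have h2 : m + 1 = n := by omega
      rw [h2, Nat.mod_self]
  -- Step 1: the matrix is tridiagonal
  have hM : (z • (1 : Matrix (Fin n) (Fin n) ℂ) + (1 / 2 : ℂ) • (A + Aᴴ))
      = Ttr z (fun m => if m + 1 < n then b m / 2 else 0)
          (fun m => if m + 1 < n then (starRingEnd ℂ) (b m) / 2 else 0) n := by
    subst hA
    ext i j
    have hi : (i : ℕ) < n := i.isLt
    have hj : (j : ℕ) < n := j.isLt
    simp only [Matrix.add_apply, Matrix.smul_apply, Matrix.one_apply,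
      Matrix.conjTranspose_apply, wsMatrix, Ttr, Matrix.of_apply, smul_eq_mul, Etr,
      Fin.ext_iff]
    rw [hmod (i : ℕ) hi, hmod (j : ℕ) hj]
    by_cases hin : (i : ℕ) + 1 < n <;> by_cases hjn : (j : ℕ) + 1 < n <;>
      simp only [hin, hjn, if_true, if_false] <;>
      split_ifs <;>
      first
        | omega
        | ring1
        | (simp [hb]; try ring1)
  rw [hM, det_Ttr, Ftr_eq_sum]
  set u : ℕ → ℂ := fun m => if m + 1 < n then b m / 2 else 0 with hu
  set v : ℕ → ℂ := fun m => if m + 1 < n then (starRingEnd ℂ) (b m) / 2 else 0 with hv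
  set c : Fin n → ℂ :=
    fun i : Fin n => if (i : ℕ) + 1 < n then (((‖a i‖ : ℝ) : ℂ)) ^ 2 else 0 with hc
  set bad : Fin n := ⟨n - 1, by omega⟩ with hbad
  have hcbad : c bad = 0 := by
    rw [hc]
    simp only [hbad]
    rw [if_neg (by omega)]
  have hwval : ∀ x : Fin n, (x : ℕ) + 1 < n → -(u (x : ℕ) * v (x : ℕ)) = c x * (-(1/4) : ℂ) := by
    intro x hx
    rw [hu, hv, hc]
    simp only [if_pos hx, hb]
    rw [← Complex.ofReal_pow, Complex.sq_norm, ← Complex.mul_conj]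
    ring
  symm
  calc
    ∑ r ∈ Finset.range (n / 2 + 1), Scirc r c * (-(1/4) : ℂ) ^ r * z ^ (n - 2 * r)
        = ∑ r ∈ Finset.range (n / 2 + 1), ∑ s ∈ Finset.univ.filter
            (fun s : Finset (Fin n) =>
              s.card = r ∧ ∀ i ∈ s, ∀ j ∈ s, ((i : ℕ) + 1) % n ≠ (j : ℕ)),
            (∏ i ∈ s, c i) * (-(1/4) : ℂ) ^ s.card * z ^ (n - 2 * s.card) := by
      refine Finset.sum_congr rfl fun r _ => ?_
      simp only [Scirc]
      rw [Finset.sum_mul, Finset.sum_mul]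
      refine Finset.sum_congr rfl fun s hs => ?_
      rw [(Finset.mem_filter.mp hs).2.1]
    _ = ∑ s ∈ Finset.univ.filter
            (fun s : Finset (Fin n) => ∀ i ∈ s, ∀ j ∈ s, ((i : ℕ) + 1) % n ≠ (j : ℕ)),
            (∏ i ∈ s, c i) * (-(1/4) : ℂ) ^ s.card * z ^ (n - 2 * s.card) := by
      have hmaps : ∀ s ∈ Finset.univ.filter
          (fun s : Finset (Fin n) => ∀ i ∈ s, ∀ j ∈ s, ((i : ℕ) + 1) % n ≠ (j : ℕ)),
          s.card ∈ Finset.range (n / 2 + 1) := by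
        intro s hs
        rw [Finset.mem_range]
        have := cyc_card_le hn s (Finset.mem_filter.mp hs).2
        omega
      have h := Finset.sum_fiberwise_of_maps_to hmaps
        (fun s : Finset (Fin n) =>
          ((∏ i ∈ s, c i) * (-(1/4) : ℂ) ^ s.card * z ^ (n - 2 * s.card) : ℂ))
      rw [← h]
      refine Finset.sum_congr rfl fun r _ => ?_
      refine Finset.sum_congr ?_ fun _ _ => rfl
      ext s
      simp only [Finset.mem_filter, Finset.mem_univ, true_and]
      tauto
    _ = ∑ s ∈ Finset.univ.filter
            (fun s : Finset (Fin n) =>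
              (∀ i ∈ s, ∀ j ∈ s, ((i : ℕ) + 1) % n ≠ (j : ℕ)) ∧ bad ∉ s),
            (∏ i ∈ s, c i) * (-(1/4) : ℂ) ^ s.card * z ^ (n - 2 * s.card) := by
      refine (Finset.sum_subset ?_ ?_).symm
      · intro s hs
        simp only [Finset.mem_filter, Finset.mem_univ, true_and] at hs ⊢
        exact hs.1
      · intro s hs hns
        simp only [Finset.mem_filter, Finset.mem_univ, true_and] at hs hns
        have hbs : bad ∈ s := by
          by_contra h
          exact hns ⟨hs, h⟩
        rw [Finset.prod_eq_zero hbs hcbad]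
        ring
    _ = ∑ t ∈ indepN n, (∏ i ∈ t, -(u i * v i)) * z ^ (n - 2 * t.card) := by
      refine Finset.sum_nbij' (fun s => s.image Fin.val)
        (fun t => Finset.univ.filter (fun x : Fin n => (x : ℕ) ∈ t)) ?_ ?_ ?_ ?_ ?_
      · -- maps forward
        intro s hs
        simp only [Finset.mem_filter, Finset.mem_univ, true_and] at hs
        obtain ⟨hP, hbs⟩ := hs
        simp only [indepN, Finset.mem_filter, Finset.mem_powerset]
        constructor
        · intro m hm
          obtain ⟨x, hx, rfl⟩ := Finset.mem_image.mp hm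
          have h1 : (x : ℕ) < n := x.isLt
          have h2 : (x : ℕ) ≠ n - 1 := by
            intro h
            apply hbs
            have hx' : x = bad := Fin.ext (by simp [hbad, h])
            rwa [← hx']
          simp only [Finset.mem_range]
          omega
        · intro m hm hm1
          obtain ⟨x, hx, rfl⟩ := Finset.mem_image.mp hm
          obtain ⟨y, hy, hxy⟩ := Finset.mem_image.mp hm1
          refine hP x hx y hy ?_
          have hyn : (y : ℕ) < n := y.isLt
          rw [Nat.mod_eq_of_lt (by omega), hxy]
      · -- maps backward
        intro t ht
        simp only [indepN, Finset.mem_filter, Finset.mem_powerset] at ht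
        obtain ⟨hsub, hind⟩ := ht
        have hlt : ∀ m ∈ t, m < n - 1 := fun m hm => Finset.mem_range.mp (hsub hm)
        simp only [Finset.mem_filter, Finset.mem_univ, true_and]
        constructor
        · intro x hx y hy
          have h1 := hlt _ hx
          rw [Nat.mod_eq_of_lt (by omega)]
          intro h
          exact hind _ hx (h ▸ hy)
        · intro h
          have hbv : (bad : ℕ) = n - 1 := by rw [hbad]
          have := hlt _ h
          omega
      · -- left inverse
        intro s _
        ext x
        simp only [Finset.mem_filter, Finset.mem_univ, true_and, Finset.mem_image]
        constructor
        · rintro ⟨y, hy, hxy⟩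
          rwa [← Fin.ext_iff.mpr hxy.symm] at hy
        · intro hx
          exact ⟨x, hx, rfl⟩
      · -- right inverse
        intro t ht
        simp only [indepN, Finset.mem_filter, Finset.mem_powerset] at ht
        have hlt : ∀ m ∈ t, m < n - 1 := fun m hm => Finset.mem_range.mp (ht.1 hm)
        ext m
        simp only [Finset.mem_image, Finset.mem_filter, Finset.mem_univ, true_and]
        constructor
        · rintro ⟨x, hx, rfl⟩
          exact hx
        · intro hm
          exact ⟨⟨m, by have := hlt m hm; omega⟩, hm, rfl⟩
      · -- values agree
        intro s hs
        simp only [Finset.mem_filter, Finset.mem_univ, true_and] at hs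
        obtain ⟨hP, hbs⟩ := hs
        rw [Finset.card_image_of_injective _ Fin.val_injective,
          Finset.prod_image (fun x _ y _ h => Fin.val_injective h)]
        have hterm : ∀ x ∈ s, -(u (x : ℕ) * v (x : ℕ)) = c x * (-(1/4) : ℂ) := by
          intro x hx
          refine hwval x ?_
          have h1 : (x : ℕ) < n := x.isLt
          have h2 : (x : ℕ) ≠ n - 1 := by
            intro h
            apply hbs
            have hx' : x = bad := Fin.ext (by simp [hbad, h])
            rwa [← hx']
          omega
        rw [Finset.prod_congr rfl hterm, Finset.prod_mul_distrib, Finset.prod_const]
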